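/- Let L be a sequence of vertex flips on the complete graph K_n using s(L) < n distinct vertices, and suppose L does not revisit any spin configuration (i.e., no block of L contains every vertex an even number of times). Then rank(A_L) ≥ s(L) + s₂(L)/2, where s₂(L) is the number of vertices appearing at least twice in L. -/

import Mathlib

open Matrix
open Finset

/-- Flip the spin of vertex `v`. -/
def flipSpin {n : ℕ} (v : Fin n) (σ : Fin n → ℝ) : Fin n → ℝ :=
  fun u => if u = v then -σ u else σ u

/-- The spin configuration obtained from `σ₀` by flipping the vertices of `L` in order. -/
def evolve {n : ℕ} (σ₀ : Fin n → ℝ) : List (Fin n) → (Fin n → ℝ)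
  | [] => σ₀
  | v :: L => evolve (flipSpin v σ₀) L

/-- A spin configuration takes values in `{-1, 1}`. -/
def isSpin {n : ℕ} (σ : Fin n → ℝ) : Prop := ∀ v, σ v = 1 ∨ σ v = -1

/-- The move matrix of a flip sequence `L` from initial configuration `σ₀` on the complete
graph: the `t`-th column is the vector `α_t` of coefficients of the change of the
Hamiltonian at step `t`, i.e. `(α_t)_{u v_t} = σ_{t-1}(v_t) σ_{t-1}(u)` for `u ≠ v_t` and
`(α_t)_e = 0` for edges `e` not incident to `v_t`.  (Rows are indexed by ordered pairs;
each edge appears as two equal rows, which does not affect the rank.) -/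
def moveMatrix {n : ℕ} (σ₀ : Fin n → ℝ) (L : List (Fin n)) :
    Matrix (Fin n × Fin n) (Fin L.length) ℝ :=
  fun e t =>
    if e.1 = L.get t ∧ e.2 ≠ L.get t then
      evolve σ₀ (L.take t.1) (L.get t) * evolve σ₀ (L.take t.1) e.2
    else if e.2 = L.get t ∧ e.1 ≠ L.get t then
      evolve σ₀ (L.take t.1) (L.get t) * evolve σ₀ (L.take t.1) e.1
    else 0

/-- `s(L)`: the number of distinct vertices appearing in `L`. -/
def sDist {n : ℕ} (L : List (Fin n)) : ℕ := L.toFinset.card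

/-- `s₂(L)`: the number of repeated vertices (appearing at least twice) in `L`. -/
def sRep {n : ℕ} (L : List (Fin n)) : ℕ :=
  (L.toFinset.filter fun v => 2 ≤ L.count v).card

/-- `s₁(L)`: the number of singletons (vertices appearing exactly once) in `L`. -/
def sSing {n : ℕ} (L : List (Fin n)) : ℕ :=
  (L.toFinset.filter fun v => L.count v = 1).card

/-- The block `L[i+1, j]` (0-indexed: positions `i, …, j-1`). -/
def seg {n : ℕ} (L : List (Fin n)) (i j : ℕ) : List (Fin n) := (L.take j).drop i

/-- `L` does not revisit any state: no (nonempty) contiguous block of `L` contains every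
vertex an even number of times. -/
def noRevisit {n : ℕ} (L : List (Fin n)) : Prop :=
  ∀ i j : ℕ, i < j → j ≤ L.length → ∃ v, ¬ Even ((seg L i j).count v)




def occF {n : ℕ} (L : List (Fin n)) (v : Fin n) : Finset (Fin L.length) :=
  univ.filter (fun t => L.get t = v)

lemma count_take {n : ℕ} (L : List (Fin n)) (v : Fin n) :
    ∀ j ≤ L.length, (L.take j).count v
      = ((occF L v).filter (fun t => t.1 < j)).card := by
  intro j
  induction j with
  | zero => simp
  | succ j ih =>
    intro hj
    have hj' : j < L.length := hj
    have hstep : L.take (j+1) = L.take j ++ [L.get ⟨j, hj'⟩] := by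
      rw [List.take_succ]
      simp [List.getElem?_eq_getElem hj']
    rw [hstep, List.count_append, ih (le_of_lt hj')]
    by_cases h : L.get ⟨j, hj'⟩ = v
    · have hset : (occF L v).filter (fun t => t.1 < j+1)
          = insert ⟨j, hj'⟩ ((occF L v).filter (fun t => t.1 < j)) := by
        ext t
        simp only [Finset.mem_filter, Finset.mem_insert, occF, Finset.mem_univ, true_and]
        constructor
        · rintro ⟨ht, htj⟩
          rcases Nat.lt_succ_iff_lt_or_eq.mp htj with h' | h'
          · exact Or.inr ⟨ht, h'⟩
          · exact Or.inl (Fin.ext h')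
        · rintro (h' | ⟨ht, htj⟩)
          · subst h'
            exact ⟨h, Nat.lt_succ_self j⟩
          · exact ⟨ht, Nat.lt_succ_of_lt htj⟩
      rw [hset, Finset.card_insert_of_notMem (by simp [occF])]
      have : L[j] = v := h
      simp [this]
    · have hset : (occF L v).filter (fun t => t.1 < j+1)
          = (occF L v).filter (fun t => t.1 < j) := by
        ext t
        simp only [Finset.mem_filter, occF, Finset.mem_univ, true_and]
        constructor
        · rintro ⟨ht, htj⟩
          refine ⟨ht, ?_⟩
          rcases Nat.lt_succ_iff_lt_or_eq.mp htj with h' | h'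
          · exact h'
          · exfalso; apply h; rw [show (⟨j, hj'⟩ : Fin L.length) = t from (Fin.ext h'.symm)]; exact ht
        · rintro ⟨ht, htj⟩; exact ⟨ht, Nat.lt_succ_of_lt htj⟩
      rw [hset]
      have h2 : L[j] ≠ v := h
      simp [List.count_singleton, h2]


lemma count_eq_card_occF {n : ℕ} (L : List (Fin n)) (v : Fin n) :
    L.count v = (occF L v).card := by
  have := count_take L v L.length le_rfl
  simpa [Finset.filter_true_of_mem (fun (t : Fin L.length) _ => t.isLt)] using this


lemma take_append_seg {n : ℕ} (L : List (Fin n)) {i j : ℕ} (hij : i ≤ j) :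
    L.take j = L.take i ++ seg L i j := by
  rw [seg]
  conv_lhs => rw [← List.take_append_drop i (L.take j)]
  rw [List.take_take, min_eq_left hij]

lemma take_succ_get {n : ℕ} (L : List (Fin n)) {j : ℕ} (hj : j < L.length) :
    L.take (j+1) = L.take j ++ [L.get ⟨j, hj⟩] := by
  rw [List.take_succ]
  simp [List.getElem?_eq_getElem hj]


lemma mem_occF {n : ℕ} {L : List (Fin n)} {v : Fin n} {t : Fin L.length} :
    t ∈ occF L v ↔ L.get t = v := by simp [occF]

lemma occF_disj {n : ℕ} {L : List (Fin n)} {v v' : Fin n} {t : Fin L.length}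
    (h : t ∈ occF L v) (h' : t ∈ occF L v') : v = v' := by
  rw [mem_occF] at h h'; rw [← h, h']

lemma occF_nonempty {n : ℕ} {L : List (Fin n)} {v : Fin n} (hv : v ∈ L) :
    (occF L v).Nonempty := by
  obtain ⟨t, ht⟩ := List.mem_iff_get.mp hv
  exact ⟨t, mem_occF.mpr ht⟩

noncomputable def lastOcc {n : ℕ} (L : List (Fin n)) (hL : 0 < L.length) (v : Fin n) :
    Fin L.length :=
  if h : (occF L v).Nonempty then (occF L v).max' h else ⟨0, hL⟩

noncomputable def prevOcc {n : ℕ} (L : List (Fin n)) (hL : 0 < L.length) (v : Fin n) :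
    Fin L.length :=
  if h : ((occF L v).erase (lastOcc L hL v)).Nonempty
    then ((occF L v).erase (lastOcc L hL v)).max' h else ⟨0, hL⟩

lemma lastOcc_mem {n : ℕ} {L : List (Fin n)} (hL : 0 < L.length) {v : Fin n} (hv : v ∈ L) :
    lastOcc L hL v ∈ occF L v := by
  rw [lastOcc, dif_pos (occF_nonempty hv)]
  exact Finset.max'_mem _ _

lemma le_lastOcc {n : ℕ} {L : List (Fin n)} (hL : 0 < L.length) {v : Fin n} {t : Fin L.length}
    (ht : t ∈ occF L v) : t ≤ lastOcc L hL v := by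
  rw [lastOcc, dif_pos ⟨t, ht⟩]
  exact Finset.le_max' _ _ ht



lemma erase_occ_nonempty {n : ℕ} {L : List (Fin n)} (hL : 0 < L.length) {v : Fin n}
    (hv : 2 ≤ L.count v) : ((occF L v).erase (lastOcc L hL v)).Nonempty := by
  rw [← Finset.card_pos, Finset.card_erase_of_mem]
  · rw [← count_eq_card_occF]; omega
  · exact lastOcc_mem hL (List.count_pos_iff.mp (by omega))

lemma prevOcc_mem {n : ℕ} {L : List (Fin n)} (hL : 0 < L.length) {v : Fin n}
    (hv : 2 ≤ L.count v) :
    prevOcc L hL v ∈ occF L v ∧ prevOcc L hL v ≠ lastOcc L hL v := by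
  rw [prevOcc, dif_pos (erase_occ_nonempty hL hv)]
  have := Finset.max'_mem _ (erase_occ_nonempty hL hv)
  rw [Finset.mem_erase] at this
  exact ⟨this.2, this.1⟩

lemma occF_le_prevOcc {n : ℕ} {L : List (Fin n)} (hL : 0 < L.length) {v : Fin n}
    (hv : 2 ≤ L.count v) {t : Fin L.length} (ht : t ∈ occF L v) :
    t ≤ prevOcc L hL v ∨ t = lastOcc L hL v := by
  by_cases h : t = lastOcc L hL v
  · exact Or.inr h
  · left
    rw [prevOcc, dif_pos (erase_occ_nonempty hL hv)]
    exact Finset.le_max' _ _ (Finset.mem_erase.mpr ⟨h, ht⟩)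

lemma prevOcc_lt_lastOcc {n : ℕ} {L : List (Fin n)} (hL : 0 < L.length) {v : Fin n}
    (hv : 2 ≤ L.count v) : prevOcc L hL v < lastOcc L hL v := by
  have h1 := prevOcc_mem hL hv
  exact lt_of_le_of_ne (le_lastOcc hL h1.1) h1.2


lemma count_v_between {n : ℕ} {L : List (Fin n)} (hL : 0 < L.length) {v : Fin n}
    (hv : 2 ≤ L.count v) :
    (L.take ((lastOcc L hL v).1 + 1)).count v = (L.take (prevOcc L hL v).1).count v + 2 := by
  set t₁ := prevOcc L hL v with ht₁
  set t₂ := lastOcc L hL v with ht₂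
  have h12 : t₁ < t₂ := prevOcc_lt_lastOcc hL hv
  have hvL : v ∈ L := List.count_pos_iff.mp (by omega)
  have ht₂mem : t₂ ∈ occF L v := lastOcc_mem hL hvL
  have ht₁mem : t₁ ∈ occF L v := (prevOcc_mem hL hv).1
  have e1 := count_take L v (t₂.1+1) (by have := t₂.isLt; omega)
  have e2 := count_take L v t₁.1 (by have := t₁.isLt; omega)
  rw [e1, e2]
  have hset : (occF L v).filter (fun t => t.1 < t₂.1 + 1)
      = insert t₂ (insert t₁ ((occF L v).filter (fun t => t.1 < t₁.1))) := by
    ext t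
    simp only [Finset.mem_filter, Finset.mem_insert]
    constructor
    · rintro ⟨ht, htlt⟩
      rcases occF_le_prevOcc hL hv ht with h' | h'
      · rcases lt_or_eq_of_le h' with h'' | h''
        · exact Or.inr (Or.inr ⟨ht, h''⟩)
        · exact Or.inr (Or.inl h'')
      · exact Or.inl h'
    · rintro (rfl | rfl | ⟨ht, htlt⟩)
      · exact ⟨ht₂mem, by omega⟩
      · exact ⟨ht₁mem, by have := Fin.lt_iff_val_lt_val.mp h12; omega⟩
      · exact ⟨ht, by have := Fin.lt_iff_val_lt_val.mp h12; omega⟩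
  have hn1 : t₁ ∉ (occF L v).filter (fun t => t.1 < t₁.1) := by
    intro hmem
    exact absurd (Finset.mem_filter.mp hmem).2 (by omega)
  have hn2 : t₂ ∉ insert t₁ ((occF L v).filter (fun t => t.1 < t₁.1)) := by
    intro hmem
    rcases Finset.mem_insert.mp hmem with h' | h'
    · exact absurd h' (ne_of_gt h12)
    · have := (Finset.mem_filter.mp h').2
      have := Fin.lt_iff_val_lt_val.mp h12
      omega
  rw [hset, Finset.card_insert_of_notMem hn2, Finset.card_insert_of_notMem hn1]

lemma witness {n : ℕ} {L : List (Fin n)} (hL : 0 < L.length) (hnr : noRevisit L) {v : Fin n}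
    (hv : 2 ≤ L.count v) :
    ∃ u : Fin n, u ≠ v ∧
      ¬ Even ((L.take (lastOcc L hL v).1).count u + (L.take (prevOcc L hL v).1).count u) := by
  set t₁ := prevOcc L hL v with ht₁
  set t₂ := lastOcc L hL v with ht₂
  have h12 : t₁ < t₂ := prevOcc_lt_lastOcc hL hv
  have h12' : t₁.1 < t₂.1 := Fin.lt_iff_val_lt_val.mp h12
  have hvL : v ∈ L := List.count_pos_iff.mp (by omega)
  obtain ⟨u, hu⟩ := hnr t₁.1 (t₂.1 + 1) (by omega) (by have := t₂.isLt; omega)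
  have happ : ∀ z : Fin n, (L.take (t₂.1+1)).count z
      = (L.take t₁.1).count z + (seg L t₁.1 (t₂.1+1)).count z := by
    intro z
    rw [take_append_seg L (by omega : t₁.1 ≤ t₂.1+1)]
    rw [List.count_append]
  have hune : u ≠ v := by
    intro h
    rw [h] at hu
    apply hu
    have h1 := happ v
    have h2 := count_v_between hL hv
    rw [← ht₁, ← ht₂] at h2
    have : (seg L t₁.1 (t₂.1+1)).count v = 2 := by omega
    rw [this]
    exact even_two
  refine ⟨u, hune, ?_⟩
  have hgt₂ : L.get t₂ = v := mem_occF.mp (lastOcc_mem hL hvL)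
  have hsucc : (L.take (t₂.1+1)).count u = (L.take t₂.1).count u := by
    rw [take_succ_get L t₂.isLt, List.count_append]
    have hne2 : ¬ (L[(t₂ : ℕ)] = u) := by
      have hh : L[(t₂ : ℕ)] = v := by
        rw [← List.get_eq_getElem]; exact hgt₂
      rw [hh]; exact Ne.symm hune
    simp [List.count_singleton, hne2]
  have h1 := happ u
  rw [Nat.even_iff] at hu ⊢
  omega

lemma evolve_apply {n : ℕ} (σ₀ : Fin n → ℝ) (l : List (Fin n)) (u : Fin n) :
    evolve σ₀ l u = (-1 : ℝ) ^ (l.count u) * σ₀ u := by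
  induction l generalizing σ₀ with
  | nil => simp [evolve]
  | cons v l ih =>
      rw [evolve, ih]
      rcases eq_or_ne v u with h | h
      · subst h
        simp [flipSpin, List.count_cons, pow_succ]
        try ring
      · simp [flipSpin, List.count_cons, h, (Ne.symm h)]

def goodList {n : ℕ} (f : Fin n → Fin n) : List (Fin n) → Prop
  | [] => True
  | v :: l => f v ∉ (v :: l) ∧ goodList f l

lemma greedy {n : ℕ} (f : Fin n → Fin n) (R : Finset (Fin n)) (hf : ∀ v ∈ R, f v ≠ v) :
    ∃ l : List (Fin n), l.Nodup ∧ (∀ v ∈ l, v ∈ R) ∧ R.card ≤ 2 * l.length ∧ goodList f l := by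
  induction R using Finset.strongInduction with
  | _ R ih =>
    rcases R.eq_empty_or_nonempty with rfl | ⟨v, hv⟩
    · exact ⟨[], by simp [goodList]⟩
    by_cases hfv : f v ∈ R
    · have hmem : f v ∈ R.erase v := Finset.mem_erase.mpr ⟨hf v hv, hfv⟩
      have hss : (R.erase v).erase (f v) ⊂ R :=
        lt_of_le_of_lt (Finset.erase_subset _ _) (Finset.erase_ssubset hv)
      obtain ⟨l, hnd, hsub, hc, hg⟩ := ih _ hss (fun u hu => hf u (hss.1 hu))
      have hvl : v ∉ l := fun hl => by
        have := hsub v hl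
        simp [Finset.mem_erase] at this
      have hfl : f v ∉ l := fun hl => by
        have := hsub (f v) hl
        simp [Finset.mem_erase] at this
      have hcard1 : (R.erase v).card = R.card - 1 := Finset.card_erase_of_mem hv
      have hcard2 : ((R.erase v).erase (f v)).card = R.card - 1 - 1 := by
        rw [Finset.card_erase_of_mem hmem, hcard1]
      have h2 : 1 ≤ (R.erase v).card := Finset.card_pos.mpr ⟨_, hmem⟩
      refine ⟨v :: l, List.nodup_cons.mpr ⟨hvl, hnd⟩, ?_, ?_, ?_⟩
      · intro u hu
        rcases List.mem_cons.mp hu with rfl | hu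
        · exact hv
        · exact hss.1 (hsub u hu)
      · simp only [List.length_cons]
        omega
      · refine ⟨?_, hg⟩
        intro hmem'
        rcases List.mem_cons.mp hmem' with h' | h'
        · exact hf v hv h'
        · exact hfl h'
    · have hss : R.erase v ⊂ R := Finset.erase_ssubset hv
      obtain ⟨l, hnd, hsub, hc, hg⟩ := ih _ hss (fun u hu => hf u (hss.1 hu))
      have hvl : v ∉ l := fun hl => by
        have := hsub v hl
        simp [Finset.mem_erase] at this
      have hfl : f v ∉ l := fun hl => hfv (hss.1 (hsub _ hl))
      have hcard1 : (R.erase v).card = R.card - 1 := Finset.card_erase_of_mem hv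
      have h1 : 1 ≤ R.card := Finset.card_pos.mpr ⟨_, hv⟩
      refine ⟨v :: l, List.nodup_cons.mpr ⟨hvl, hnd⟩, ?_, ?_, ?_⟩
      · intro u hu
        rcases List.mem_cons.mp hu with rfl | hu
        · exact hv
        · exact hss.1 (hsub u hu)
      · simp only [List.length_cons]; omega
      · refine ⟨?_, hg⟩
        intro hmem'
        rcases List.mem_cons.mp hmem' with h' | h'
        · exact hf v hv h'
        · exact hfl h'


lemma evolve_ne_zero {n : ℕ} {σ₀ : Fin n → ℝ} (h : isSpin σ₀) (l : List (Fin n)) (v : Fin n) :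
    evolve σ₀ l v ≠ 0 := by
  rw [evolve_apply]
  apply mul_ne_zero (pow_ne_zero _ (by norm_num))
  rcases h v with h' | h' <;> rw [h'] <;> norm_num

/-- Lemma 3.1(ii): if `s(L) < n` and `L` does not revisit any state, then
`rank(A_L) ≥ s(L) + s₂(L)/2`. -/
theorem stmt4 (n : ℕ) (L : List (Fin n)) (σ₀ : Fin n → ℝ) (h : isSpin σ₀)
    (hs : sDist L < n) (hnr : noRevisit L) :
    (sDist L : ℝ) + (sRep L : ℝ) / 2 ≤ ((moveMatrix σ₀ L).rank : ℝ) := by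
  classical
  rcases Nat.eq_zero_or_pos L.length with h0 | hL
  · have hnil : L = [] := List.length_eq_zero_iff.mp h0
    subst hnil
    simp [sDist, sRep]
  -- a vertex not appearing in L
  obtain ⟨w, hw⟩ : ∃ w : Fin n, w ∉ L := by
    have hcard : L.toFinset ≠ univ := by
      intro hEq
      rw [sDist, hEq, Finset.card_univ, Fintype.card_fin] at hs
      omega
    by_contra hno
    push_neg at hno
    have hsubu : (univ : Finset (Fin n)) ⊆ L.toFinset := fun a _ => List.mem_toFinset.mpr (hno a)
    have := Finset.card_le_card hsubu
    rw [Finset.card_univ, Fintype.card_fin] at this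
    rw [sDist] at hs
    omega
  -- the witness function
  obtain ⟨f, hfspec⟩ : ∃ f : Fin n → Fin n, ∀ v, 2 ≤ L.count v → f v ≠ v ∧
      ¬ Even ((L.take (lastOcc L hL v).1).count (f v) + (L.take (prevOcc L hL v).1).count (f v)) :=
    ⟨fun v => if hv : 2 ≤ L.count v then (witness hL hnr hv).choose else v,
      fun v hv => by beta_reduce; rw [dif_pos hv]; exact (witness hL hnr hv).choose_spec⟩
  set Rep : Finset (Fin n) := L.toFinset.filter (fun v => 2 ≤ L.count v) with hRepDef
  have hRep2 : ∀ v ∈ Rep, 2 ≤ L.count v := fun v hv => (Finset.mem_filter.mp hv).2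
  obtain ⟨l, hnd, hsub, hc2, hg⟩ := greedy f Rep (fun v hv => (hfspec v (hRep2 v hv)).1)
  have hsub2 : ∀ v ∈ l, 2 ≤ L.count v := fun v hv => hRep2 v (hsub v hv)
  -- the distinguished positions
  set F : Finset (Fin L.length) :=
    (L.toFinset.image (lastOcc L hL)) ∪ (l.toFinset.image (prevOcc L hL)) with hFdef
  have hFcard : F.card = sDist L + l.length := by
    rw [hFdef, Finset.card_union_of_disjoint, Finset.card_image_of_injOn,
      Finset.card_image_of_injOn, List.toFinset_card_of_nodup hnd, sDist]
    · intro a ha b hb hab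
      have h2a : 2 ≤ L.count a := hsub2 a (List.mem_toFinset.mp ha)
      have h2b : 2 ≤ L.count b := hsub2 b (List.mem_toFinset.mp hb)
      exact occF_disj (prevOcc_mem hL h2a).1 (hab ▸ (prevOcc_mem hL h2b).1)
    · intro a ha b hb hab
      exact occF_disj (lastOcc_mem hL (List.mem_toFinset.mp ha))
        (hab ▸ lastOcc_mem hL (List.mem_toFinset.mp hb))
    · rw [Finset.disjoint_left]
      rintro t ht ht'
      obtain ⟨a, ha, rfl⟩ := Finset.mem_image.mp ht
      obtain ⟨b, hb, he⟩ := Finset.mem_image.mp ht'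
      have h2b : 2 ≤ L.count b := hsub2 b (List.mem_toFinset.mp hb)
      have hab : b = a := occF_disj (prevOcc_mem hL h2b).1
        (he ▸ lastOcc_mem hL (List.mem_toFinset.mp ha))
      exact (prevOcc_mem hL h2b).2 (by rw [he, hab])
  -- membership of occurrences in F
  have hFin : ∀ (v : Fin n) (t : Fin L.length), t ∈ occF L v → t ∈ F →
      t = lastOcc L hL v ∨ (v ∈ l ∧ t = prevOcc L hL v) := by
    intro v t ht htF
    rcases Finset.mem_union.mp htF with h' | h'
    · obtain ⟨v', hv', he⟩ := Finset.mem_image.mp h'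
      have hmem : lastOcc L hL v' ∈ occF L v' := lastOcc_mem hL (List.mem_toFinset.mp hv')
      have hvv : v' = v := occF_disj (he ▸ hmem) ht
      left; rw [← he, hvv]
    · obtain ⟨v', hv', he⟩ := Finset.mem_image.mp h'
      have h2 : 2 ≤ L.count v' := hsub2 v' (List.mem_toFinset.mp hv')
      have hmem : prevOcc L hL v' ∈ occF L v' := (prevOcc_mem hL h2).1
      have hvv : v' = v := occF_disj (he ▸ hmem) ht
      right
      exact ⟨hvv ▸ List.mem_toFinset.mp hv', by rw [← he, hvv]⟩
  -- the key claim: kernel vectors supported on F are zero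
  have key : ∀ x : Fin L.length → ℝ, (moveMatrix σ₀ L).mulVec x = 0 →
      (∀ t, t ∉ F → x t = 0) → x = 0 := by
    intro x hker hT
    have hrow : ∀ e, ∑ t, moveMatrix σ₀ L e t * x t = 0 := by
      intro e
      have := congrFun hker e
      simpa [Matrix.mulVec, dotProduct] using this
    have hgetmem : ∀ t : Fin L.length, L.get t ∈ L := fun t => by
      simpa using List.get_mem L t.1 t.2
    have hgetne : ∀ t : Fin L.length, L.get t ≠ w := fun t he => hw (he ▸ hgetmem t)
    have hsigw : ∀ j : ℕ, evolve σ₀ (L.take j) w = σ₀ w := by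
      intro j
      rw [evolve_apply, List.count_eq_zero_of_not_mem (fun hmem => hw (List.take_subset _ _ hmem))]
      simp
    have hσw : σ₀ w ≠ 0 := by rcases h w with h' | h' <;> rw [h'] <;> norm_num
    have H1 : ∀ v : Fin n, ∑ t ∈ occF L v, evolve σ₀ (L.take t.1) v * x t = 0 := by
      intro v
      by_cases hvw : v = w
      · have : occF L v = ∅ := by
          ext t; simp only [mem_occF, Finset.notMem_empty, iff_false]
          rw [hvw]; exact hgetne t
        rw [this, Finset.sum_empty]
      · have heq := hrow (v, w)
        have hterm : ∀ t : Fin L.length, moveMatrix σ₀ L (v, w) t * x t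
            = σ₀ w * (if L.get t = v then evolve σ₀ (L.take t.1) v * x t else 0) := by
          intro t
          simp only [moveMatrix]
          by_cases hgt : L.get t = v
          · rw [if_pos ⟨hgt.symm, Ne.symm (hgetne t)⟩, if_pos hgt, hgt, hsigw]
            ring
          · rw [if_neg (fun hc => hgt hc.1.symm), if_neg (fun hc => (hgetne t) hc.1.symm),
              if_neg hgt]
            ring
        rw [Finset.sum_congr rfl (fun t _ => hterm t), ← Finset.mul_sum] at heq
        have h0 := (mul_eq_zero.mp heq).resolve_left hσw
        rw [← Finset.sum_filter] at h0
        exact h0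
    have H2 : ∀ a b : Fin n, a ≠ b →
        ∑ t ∈ occF L a ∪ occF L b,
          evolve σ₀ (L.take t.1) a * evolve σ₀ (L.take t.1) b * x t = 0 := by
      intro a b hab
      have heq := hrow (a, b)
      have hterm : ∀ t : Fin L.length, moveMatrix σ₀ L (a, b) t * x t
          = if L.get t = a ∨ L.get t = b then
              evolve σ₀ (L.take t.1) a * evolve σ₀ (L.take t.1) b * x t else 0 := by
        intro t
        simp only [moveMatrix]
        by_cases hga : L.get t = a
        · rw [if_pos ⟨hga.symm, fun hc => hab (hga.symm.trans hc.symm)⟩,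
            if_pos (Or.inl hga), hga]
          try ring
        · by_cases hgb : L.get t = b
          · rw [if_neg (fun hc => hga hc.1.symm), if_pos ⟨hgb.symm, fun hc => hga hc.symm⟩,
              if_pos (Or.inr hgb), hgb]
            ring
          · rw [if_neg (fun hc => hga hc.1.symm), if_neg (fun hc => hgb hc.1.symm),
              if_neg (fun hc => hc.elim hga hgb)]
            ring
      rw [Finset.sum_congr rfl (fun t _ => hterm t)] at heq
      rw [← Finset.sum_filter, Finset.filter_or] at heq
      exact heq
    -- base: vertices outside l
    have hbase : ∀ u : Fin n, u ∉ l → ∀ t ∈ occF L u, x t = 0 := by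
      intro v hvl
      by_cases hvL : v ∈ L
      · have hzn : ∀ t ∈ occF L v, t ≠ lastOcc L hL v → x t = 0 := by
          intro t ht hne
          apply hT
          intro htF
          rcases hFin v t ht htF with h' | ⟨hvl', _⟩
          · exact hne h'
          · exact hvl hvl'
        have hsum := H1 v
        rw [← Finset.sum_subset (Finset.singleton_subset_iff.mpr (lastOcc_mem hL hvL))
          (fun t ht htn => by
            rw [hzn t ht (Finset.notMem_singleton.mp htn), mul_zero])] at hsum
        rw [Finset.sum_singleton] at hsum
        have hxl : x (lastOcc L hL v) = 0 :=
          (mul_eq_zero.mp hsum).resolve_left (evolve_ne_zero h _ _)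
        intro t ht
        by_cases hte : t = lastOcc L hL v
        · rw [hte]; exact hxl
        · exact hzn t ht hte
      · intro t ht
        exact absurd (mem_occF.mp ht ▸ hgetmem t) hvL
    -- step
    have hstep : ∀ (v : Fin n) (l'' : List (Fin n)), v ∈ Rep → f v ∉ v :: l'' →
        (∀ u, u ∉ v :: l'' → ∀ t ∈ occF L u, x t = 0) →
        ∀ u, u ∉ l'' → ∀ t ∈ occF L u, x t = 0 := by
      intro v l'' hvRep hfv hprev u hul''
      by_cases huv : u = v
      swap
      · refine hprev u (fun hmem => ?_)
        rcases List.mem_cons.mp hmem with h' | h'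
        · exact huv h'
        · exact hul'' h'
      subst huv
      have h2 : 2 ≤ L.count u := hRep2 u hvRep
      have hvL : u ∈ L := List.count_pos_iff.mp (by omega)
      set t₁ := prevOcc L hL u with ht₁d
      set t₂ := lastOcc L hL u with ht₂d
      have ht₁mem : t₁ ∈ occF L u := (prevOcc_mem hL h2).1
      have ht₂mem : t₂ ∈ occF L u := lastOcc_mem hL hvL
      have hne12 : t₁ ≠ t₂ := (prevOcc_mem hL h2).2
      have hfune : f u ≠ u := (hfspec u h2).1
      have hodd : ¬ Even ((L.take t₂.1).count (f u) + (L.take t₁.1).count (f u)) :=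
        (hfspec u h2).2
      have hfuz : ∀ t ∈ occF L (f u), x t = 0 := hprev (f u) hfv
      have hoff : ∀ t ∈ occF L u, t ≠ t₁ → t ≠ t₂ → x t = 0 := by
        intro t ht hn1 hn2
        apply hT
        intro htF
        rcases hFin u t ht htF with h' | ⟨_, h'⟩
        · exact hn2 h'
        · exact hn1 h'
      have hpair_sub : ({t₁, t₂} : Finset (Fin L.length)) ⊆ occF L u := by
        intro t ht
        rcases Finset.mem_insert.mp ht with rfl | ht'
        · exact ht₁mem
        · rw [Finset.mem_singleton.mp ht']; exact ht₂mem
      have hsum1 := H1 u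
      rw [← Finset.sum_subset hpair_sub (fun t ht htn => by
        rw [hoff t ht (fun hc => htn (hc ▸ Finset.mem_insert_self _ _))
          (fun hc => htn (hc ▸ Finset.mem_insert_of_mem (Finset.mem_singleton_self _))),
          mul_zero])] at hsum1
      rw [Finset.sum_pair hne12] at hsum1
      have hpair_sub2 : ({t₁, t₂} : Finset (Fin L.length)) ⊆ occF L u ∪ occF L (f u) :=
        hpair_sub.trans Finset.subset_union_left
      have hsum2 := H2 u (f u) (Ne.symm hfune)
      rw [← Finset.sum_subset hpair_sub2 (fun t ht htn => by
        rcases Finset.mem_union.mp ht with h' | h'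
        · rw [hoff t h' (fun hc => htn (hc ▸ Finset.mem_insert_self _ _))
            (fun hc => htn (hc ▸ Finset.mem_insert_of_mem (Finset.mem_singleton_self _))),
            mul_zero]
        · rw [hfuz t h', mul_zero])] at hsum2
      rw [Finset.sum_pair hne12] at hsum2
      -- sign flip
      have hflip : evolve σ₀ (L.take t₂.1) (f u) = - evolve σ₀ (L.take t₁.1) (f u) := by
        rw [evolve_apply, evolve_apply]
        have hodd' : Odd ((L.take t₂.1).count (f u) + (L.take t₁.1).count (f u)) :=
          Nat.odd_iff.mpr (by rw [Nat.even_iff] at hodd; omega)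
        have hmul : (-1 : ℝ) ^ ((L.take t₂.1).count (f u)) *
            (-1) ^ ((L.take t₁.1).count (f u)) = -1 := by
          rw [← pow_add]; exact Odd.neg_one_pow hodd'
        have hsq : (-1 : ℝ) ^ ((L.take t₁.1).count (f u)) *
            (-1) ^ ((L.take t₁.1).count (f u)) = 1 := by
          rw [← pow_add]; exact Even.neg_one_pow ⟨_, rfl⟩
        linear_combination (σ₀ (f u) * (-1 : ℝ) ^ ((L.take t₁.1).count (f u))) * hmul
          - (σ₀ (f u) * (-1 : ℝ) ^ ((L.take t₂.1).count (f u))) * hsq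
      rw [hflip] at hsum2
      -- finish the 2×2 system
      have hc : evolve σ₀ (L.take t₁.1) (f u) ≠ 0 := evolve_ne_zero h _ _
      have ha : evolve σ₀ (L.take t₁.1) u ≠ 0 := evolve_ne_zero h _ _
      have hb : evolve σ₀ (L.take t₂.1) u ≠ 0 := evolve_ne_zero h _ _
      have h3 : evolve σ₀ (L.take t₁.1) u * x t₁ - evolve σ₀ (L.take t₂.1) u * x t₂ = 0 := by
        have : evolve σ₀ (L.take t₁.1) (f u) *
            (evolve σ₀ (L.take t₁.1) u * x t₁ - evolve σ₀ (L.take t₂.1) u * x t₂) = 0 := by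
          linear_combination hsum2
        exact (mul_eq_zero.mp this).resolve_left hc
      have hx1 : x t₁ = 0 := by
        have : evolve σ₀ (L.take t₁.1) u * x t₁ = 0 := by linarith
        exact (mul_eq_zero.mp this).resolve_left ha
      have hx2 : x t₂ = 0 := by
        have : evolve σ₀ (L.take t₂.1) u * x t₂ = 0 := by linarith
        exact (mul_eq_zero.mp this).resolve_left hb
      intro t ht
      by_cases he1 : t = t₁
      · rw [he1]; exact hx1
      by_cases he2 : t = t₂
      · rw [he2]; exact hx2
      exact hoff t ht he1 he2
    -- induction over the list
    have hall : ∀ l'' : List (Fin n), goodList f l'' → (∀ v ∈ l'', v ∈ Rep) →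
        (∀ u, u ∉ l'' → ∀ t ∈ occF L u, x t = 0) → ∀ t, x t = 0 := by
      intro l''
      induction l'' with
      | nil =>
        intro _ _ hz t
        exact hz (L.get t) List.not_mem_nil t (mem_occF.mpr rfl)
      | cons v l'' ih =>
        intro hg' hsubR hz
        exact ih hg'.2 (fun a ha => hsubR a (List.mem_cons_of_mem _ ha))
          (hstep v l'' (hsubR v List.mem_cons_self) hg'.1 hz)
    funext t
    exact hall l hg hsub hbase t
  -- rank bound
  have hrk : (moveMatrix σ₀ L).rank
      + Module.finrank ℝ (LinearMap.ker (moveMatrix σ₀ L).mulVecLin) = L.length := by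
    have h1 := LinearMap.finrank_range_add_finrank_ker (moveMatrix σ₀ L).mulVecLin
    have h2 : (moveMatrix σ₀ L).rank
        = Module.finrank ℝ (LinearMap.range (moveMatrix σ₀ L).mulVecLin) := rfl
    rw [h2, h1]
    simp
  have hKle : Module.finrank ℝ (LinearMap.ker (moveMatrix σ₀ L).mulVecLin)
      ≤ L.length - F.card := by
    have hinj : Function.Injective
        ((LinearMap.funLeft ℝ ℝ (fun t : ↥(Fᶜ : Finset (Fin L.length)) => (t : Fin L.length))).comp
          (LinearMap.ker (moveMatrix σ₀ L).mulVecLin).subtype) := by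
      rw [← LinearMap.ker_eq_bot, LinearMap.ker_eq_bot']
      intro x hx
      have hx0 : ∀ t, t ∉ F → (x : Fin L.length → ℝ) t = 0 := by
        intro t htF
        exact congrFun hx ⟨t, Finset.mem_compl.mpr htF⟩
      have hker : (moveMatrix σ₀ L).mulVec (x : Fin L.length → ℝ) = 0 := x.2
      exact Subtype.ext (key _ hker hx0)
    have := LinearMap.finrank_le_finrank_of_injective hinj
    calc Module.finrank ℝ (LinearMap.ker (moveMatrix σ₀ L).mulVecLin)
        ≤ Module.finrank ℝ (↥(Fᶜ : Finset (Fin L.length)) → ℝ) := this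
      _ = (Fᶜ : Finset (Fin L.length)).card := by
          rw [Module.finrank_pi]; exact Fintype.card_coe _
      _ = L.length - F.card := by rw [Finset.card_compl]; simp
  have hFle : F.card ≤ L.length := by
    have := Finset.card_le_card (Finset.subset_univ F)
    simpa using this
  have hrank : sDist L + l.length ≤ (moveMatrix σ₀ L).rank := by omega
  have hs2 : sRep L ≤ 2 * l.length := hc2
  have hcast : (sDist L : ℝ) + (l.length : ℝ) ≤ ((moveMatrix σ₀ L).rank : ℝ) := by
    exact_mod_cast hrank
  have hcast2 : (sRep L : ℝ) ≤ 2 * (l.length : ℝ) := by exact_mod_cast hs2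
  linarith
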